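/- Let ℓ be a prime, r ≥ 1, and Π a closed subgroup of GL_r(ℤ_ℓ). Let n ≥ 1 and let C ⊆ Π be a closed subgroup such that Π(n-1) ⊄ C. Then there exists U ∈ 𝒞_n(Π) with C ⊆ U. -/

import Mathlib

open Matrix
open Pointwise

section GLInstances

variable (l : ℕ) [Fact (Nat.Prime l)] (r : ℕ)

instance : CompactSpace (Matrix (Fin r) (Fin r) ℤ_[l]) :=
  inferInstanceAs (CompactSpace (Fin r → Fin r → ℤ_[l]))

instance : TotallyDisconnectedSpace (Matrix (Fin r) (Fin r) ℤ_[l]) :=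
  inferInstanceAs (TotallyDisconnectedSpace (Fin r → Fin r → ℤ_[l]))

theorem isClosed_range_embedProduct :
    IsClosed (Set.range (Units.embedProduct (Matrix (Fin r) (Fin r) ℤ_[l]))) := by
  have : Set.range (Units.embedProduct (Matrix (Fin r) (Fin r) ℤ_[l]))
      = {p : Matrix (Fin r) (Fin r) ℤ_[l] × (Matrix (Fin r) (Fin r) ℤ_[l])ᵐᵒᵖ |
            p.1 * p.2.unop = 1 ∧ p.2.unop * p.1 = 1} := by
    ext p
    constructor
    · rintro ⟨u, rfl⟩
      simp [Units.embedProduct]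
    · rintro ⟨h1, h2⟩
      exact ⟨⟨p.1, p.2.unop, h1, h2⟩, rfl⟩
  rw [this]
  have hc1 : Continuous fun p : Matrix (Fin r) (Fin r) ℤ_[l] ×
      (Matrix (Fin r) (Fin r) ℤ_[l])ᵐᵒᵖ => p.1 * p.2.unop :=
    (continuous_fst.mul (MulOpposite.continuous_unop.comp continuous_snd))
  have hc2 : Continuous fun p : Matrix (Fin r) (Fin r) ℤ_[l] ×
      (Matrix (Fin r) (Fin r) ℤ_[l])ᵐᵒᵖ => p.2.unop * p.1 :=
    ((MulOpposite.continuous_unop.comp continuous_snd).mul continuous_fst)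
  exact (isClosed_eq hc1 continuous_const).inter (isClosed_eq hc2 continuous_const)

instance : CompactSpace (Matrix (Fin r) (Fin r) ℤ_[l])ᵐᵒᵖ :=
  MulOpposite.opHomeomorph.compactSpace

instance : CompactSpace (GL (Fin r) ℤ_[l]) :=
  (Topology.IsClosedEmbedding.mk Units.isEmbedding_embedProduct
    (isClosed_range_embedProduct l r)).compactSpace

instance : TotallyDisconnectedSpace (Matrix (Fin r) (Fin r) ℤ_[l])ᵐᵒᵖ :=
  MulOpposite.opHomeomorph.symm.isEmbedding.isTotallyDisconnected_range.mp
    (isTotallyDisconnected_of_totallyDisconnectedSpace _)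

instance : TotallyDisconnectedSpace (GL (Fin r) ℤ_[l]) :=
  Units.isEmbedding_embedProduct.isTotallyDisconnected_range.mp
    (isTotallyDisconnected_of_totallyDisconnectedSpace _)

end GLInstances

/-- Reduction modulo `ℓ ^ n` on `GL_r(ℤ_ℓ)`. -/
noncomputable def glRed (l : ℕ) [Fact (Nat.Prime l)] (r n : ℕ) :
    GL (Fin r) ℤ_[l] →* GL (Fin r) (ZMod (l ^ n)) :=
  Matrix.GeneralLinearGroup.map (PadicInt.toZModPow n)

/-- `Π(n)`: the kernel of reduction modulo `ℓ ^ n` restricted to the closed subgroup `Π`,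
viewed as a subgroup of `Π`. -/
noncomputable def levelSubgroup (l : ℕ) [Fact (Nat.Prime l)] (r : ℕ)
    (P : Subgroup (GL (Fin r) ℤ_[l])) (n : ℕ) : Subgroup ↥P :=
  ((glRed l r n).comp P.subtype).ker

/-- A maximal proper open subgroup of a topological group. -/
def IsMaximalOpenSubgroup {G : Type*} [Group G] [TopologicalSpace G] (U : Subgroup G) : Prop :=
  IsOpen (U : Set G) ∧ U ≠ ⊤ ∧ ∀ V : Subgroup G, IsOpen (V : Set G) → U < V → V = ⊤

/-- The Frattini subgroup of a topological group: the intersection of all maximal proper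
open subgroups. -/
def frattiniOpen (G : Type*) [Group G] [TopologicalSpace G] : Subgroup G :=
  sInf {U : Subgroup G | IsMaximalOpenSubgroup U}

/-- The Frattini subgroup of a subgroup `K`, viewed as a subgroup of the ambient group. -/
def frattiniOf {G : Type*} [Group G] [TopologicalSpace G] (K : Subgroup G) : Subgroup G :=
  (frattiniOpen ↥K).map K.subtype

theorem isClosed_ball_toZModPow (l : ℕ) [hl : Fact (Nat.Prime l)] (m : ℕ) (b : ℤ_[l]) :
    IsClosed {x : ℤ_[l] | PadicInt.toZModPow m x = PadicInt.toZModPow m b} := by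
  have : {x : ℤ_[l] | PadicInt.toZModPow m x = PadicInt.toZModPow m b}
      = Metric.closedBall b ((l : ℝ) ^ (-(m : ℤ))) := by
    ext x
    rw [Metric.mem_closedBall, dist_eq_norm, Set.mem_setOf_eq,
      ← sub_eq_zero, ← map_sub, ← RingHom.mem_ker, PadicInt.ker_toZModPow,
      ← PadicInt.norm_le_pow_iff_mem_span_pow]
  rw [this]
  exact Metric.isClosed_closedBall

theorem isClosed_ker_glRed (l : ℕ) [Fact (Nat.Prime l)] (r m : ℕ) :
    IsClosed (((glRed l r m).ker : Subgroup (GL (Fin r) ℤ_[l])) : Set (GL (Fin r) ℤ_[l])) := by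
  have heq : (((glRed l r m).ker : Subgroup (GL (Fin r) ℤ_[l])) : Set (GL (Fin r) ℤ_[l]))
      = ⋂ i, ⋂ j, {A : GL (Fin r) ℤ_[l] |
          PadicInt.toZModPow m ((A : Matrix (Fin r) (Fin r) ℤ_[l]) i j)
            = PadicInt.toZModPow m ((1 : Matrix (Fin r) (Fin r) ℤ_[l]) i j)} := by
    have h1 : ∀ i j : Fin r, PadicInt.toZModPow (p := l) m
        ((1 : Matrix (Fin r) (Fin r) ℤ_[l]) i j)
          = (1 : Matrix (Fin r) (Fin r) (ZMod (l ^ m))) i j := by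
      intro i j
      by_cases h : i = j <;> simp [Matrix.one_apply, h]
    ext A
    simp only [SetLike.mem_coe, MonoidHom.mem_ker, Set.mem_iInter, Set.mem_setOf_eq]
    constructor
    · intro h i j
      have := congrArg (fun B : GL (Fin r) (ZMod (l ^ m)) =>
        (B : Matrix (Fin r) (Fin r) (ZMod (l ^ m))) i j) h
      rw [h1 i j]
      simpa [glRed, Matrix.GeneralLinearGroup.map] using this
    · intro h
      ext i j
      have := h i j
      rw [h1 i j] at this
      simpa [glRed, Matrix.GeneralLinearGroup.map] using this
  rw [heq]
  refine isClosed_iInter fun i => isClosed_iInter fun j => ?_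
  have hc : Continuous fun A : GL (Fin r) ℤ_[l] => (A : Matrix (Fin r) (Fin r) ℤ_[l]) i j :=
    Units.continuous_val.matrix_elem i j
  exact (isClosed_ball_toZModPow l m _).preimage hc

section General

variable {G : Type*} [Group G] [TopologicalSpace G] [IsTopologicalGroup G] [CompactSpace G]
  [TotallyDisconnectedSpace G] [T2Space G]

/-- Separate a closed subgroup from a point outside it by an open subgroup. -/
theorem exists_isOpen_subgroup_separating (D : Subgroup G) (hD : IsClosed (D : Set G))
    {x : G} (hx : x ∉ D) :
    ∃ U : Subgroup G, IsOpen (U : Set G) ∧ D ≤ U ∧ x ∉ U := by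
  have hS : IsClosed ((fun d => d * x) '' (D : Set G)) :=
    (Homeomorph.mulRight x).isClosedMap _ hD
  have h1S : (1 : G) ∉ (fun d => d * x) '' (D : Set G) := by
    rintro ⟨d, hd, hdx⟩
    simp only at hdx
    have hxd : x = d⁻¹ := eq_inv_of_mul_eq_one_right hdx
    exact hx (hxd ▸ D.inv_mem hd)
  obtain ⟨V, hVclopen, h1V, hVsub⟩ :=
    compact_exists_isClopen_in_isOpen hS.isOpen_compl h1S
  obtain ⟨N, hN⟩ :=
    IsTopologicalGroup.exist_openNormalSubgroup_sub_clopen_nhds_of_one hVclopen h1V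
  refine ⟨D ⊔ N.toSubgroup, ?_, le_sup_left, ?_⟩
  · exact Subgroup.isOpen_mono (le_sup_right : N.toSubgroup ≤ _) N.isOpen
  · intro hxU
    have : x ∈ (D : Set G) * (N.toSubgroup : Set G) := by
      rw [← Subgroup.mul_normal D N.toSubgroup]; exact hxU
    obtain ⟨d, hd, nn, hn, rfl⟩ := this
    have hmem : nn ∈ (fun y => y * (d * nn)) '' (D : Set G) :=
      ⟨d⁻¹, D.inv_mem hd, by simp [inv_mul_cancel_left]⟩
    exact (hVsub (hN hn)) (hmem)

theorem exists_maximalOpen_of_ne_top (D : Subgroup G) (hD : IsClosed (D : Set G))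
    (hne : D ≠ ⊤) : ∃ M : Subgroup G, IsMaximalOpenSubgroup M ∧ D ≤ M := by
  obtain ⟨x, hx⟩ : ∃ x, x ∉ D := by
    by_contra h
    push_neg at h
    exact hne (Subgroup.eq_top_iff' D |>.mpr h)
  obtain ⟨U, hUopen, hDU, hxU⟩ := exists_isOpen_subgroup_separating D hD hx
  set s : Set (Subgroup G) := {V | IsOpen (V : Set G) ∧ U ≤ V ∧ V ≠ ⊤} with hs
  have hUs : U ∈ s := ⟨hUopen, le_rfl, fun h => hxU (h ▸ Subgroup.mem_top x)⟩
  have hzorn : ∀ c ⊆ s, IsChain (· ≤ ·) c → ∀ y ∈ c, ∃ ub ∈ s, ∀ z ∈ c, z ≤ ub := by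
    intro c hcs hchain y hy
    haveI : Nonempty c := ⟨⟨y, hy⟩⟩
    have hdir : Directed (· ≤ ·) (fun V : c => (V : Subgroup G)) :=
      hchain.directed
    refine ⟨⨆ V : c, (V : Subgroup G), ⟨?_, ?_, ?_⟩,
      fun z hz => le_iSup (fun V : c => (V : Subgroup G)) ⟨z, hz⟩⟩
    · have hcoe := Subgroup.coe_iSup_of_directed hdir
      rw [hcoe]
      exact isOpen_iUnion fun V => (hcs V.2).1
    · exact le_trans (hcs hy).2.1 (le_iSup (fun V : c => (V : Subgroup G)) ⟨y, hy⟩)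
    · intro htop
      have hcov : (Set.univ : Set G) ⊆ ⋃ V : c, ((V : Subgroup G) : Set G) := by
        rw [← Subgroup.coe_iSup_of_directed hdir, htop]
        simp
      have hdirS : Directed (· ⊆ ·) (fun V : c => ((V : Subgroup G) : Set G)) :=
        fun a b => (hdir a b).imp fun z hz =>
          ⟨SetLike.coe_subset_coe.mpr hz.1, SetLike.coe_subset_coe.mpr hz.2⟩
      obtain ⟨V, hV⟩ := isCompact_univ.elim_directed_cover
        (fun V : c => ((V : Subgroup G) : Set G)) (fun V => (hcs V.2).1)
        hcov hdirS
      have : (V : Subgroup G) = ⊤ := by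
        refine top_le_iff.mp fun g _ => ?_
        exact hV (Set.mem_univ g)
      exact (hcs V.2).2.2 this
  obtain ⟨M, hUM, hMs, hMmax⟩ : ∃ M, U ≤ M ∧ M ∈ s ∧ ∀ z ∈ s, M ≤ z → z ≤ M := by
    obtain ⟨M, hM1, hM2⟩ := zorn_le_nonempty₀ s hzorn U hUs
    exact ⟨M, hM1, hM2.1, fun z hz hMz => hM2.2 hz hMz⟩
  refine ⟨M, ⟨(hMs).1, (hMs).2.2, ?_⟩, le_trans hDU hUM⟩
  intro V hVopen hMV
  by_contra hVne
  have : V ∈ s := ⟨hVopen, le_trans hUM hMV.le, hVne⟩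
  exact absurd (hMmax V this hMV.le) (not_le_of_gt hMV)

theorem eq_top_of_sup_frattiniOpen (H : Subgroup G) (hH : IsClosed (H : Set G))
    (h : H ⊔ frattiniOpen G = ⊤) : H = ⊤ := by
  by_contra hne
  obtain ⟨M, hMmax, hHM⟩ := exists_maximalOpen_of_ne_top H hH hne
  have hΦ : frattiniOpen G ≤ M := sInf_le hMmax
  have : (⊤ : Subgroup G) ≤ M := h ▸ sup_le hHM hΦ
  exact hMmax.2.1 (top_le_iff.mp this)

end General

section FrattiniAut

variable {T : Type*} [Group T] [TopologicalSpace T]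

omit [TopologicalSpace T] in
theorem comap_comap_mulEquiv (e : T ≃* T) (H : Subgroup T) :
    Subgroup.comap (e.symm : T →* T) (Subgroup.comap (e : T →* T) H) = H := by
  ext g
  simp [Subgroup.mem_comap]

theorem isMaximalOpenSubgroup_comap (e : T ≃* T) (he : Continuous e)
    (he' : Continuous e.symm) {M : Subgroup T} (hM : IsMaximalOpenSubgroup M) :
    IsMaximalOpenSubgroup (Subgroup.comap (e : T →* T) M) := by
  obtain ⟨hMopen, hMne, hMmax⟩ := hM
  refine ⟨hMopen.preimage he, ?_, ?_⟩
  · intro h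
    apply hMne
    rw [eq_top_iff]
    intro g _
    have hg : e.symm g ∈ Subgroup.comap (e : T →* T) M := h ▸ Subgroup.mem_top _
    simpa [Subgroup.mem_comap] using hg
  · intro V hVopen hlt
    have key' : Subgroup.comap (e : T →* T) (Subgroup.comap (e.symm : T →* T) V) = V :=
      comap_comap_mulEquiv e.symm V
    have hMlt : M < Subgroup.comap (e.symm : T →* T) V := by
      refine lt_of_le_of_ne ?_ ?_
      · conv_lhs => rw [← comap_comap_mulEquiv e M]
        exact Subgroup.comap_mono hlt.le
      · intro h
        rw [← h] at key'
        exact hlt.ne key'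
    have := hMmax _ (hVopen.preimage he') hMlt
    rw [this] at key'
    rw [← key']
    ext g; simp [Subgroup.mem_comap]

theorem mem_frattiniOpen_of_aut (e : T ≃* T) (he : Continuous e)
    (he' : Continuous e.symm) {x : T} (hx : x ∈ frattiniOpen T) : e x ∈ frattiniOpen T := by
  rw [frattiniOpen, Subgroup.mem_sInf] at hx ⊢
  intro M hM
  have hcm := isMaximalOpenSubgroup_comap e he he' hM
  exact hx _ hcm

end FrattiniAut

/-- `𝒞_n(Π)`: the set of open subgroups `U ⊆ Π` with `Φ(Π(n-1)) ⊆ U` but `Π(n-1) ⊄ U`. -/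
noncomputable def Cn (l : ℕ) [Fact (Nat.Prime l)] (r : ℕ)
    (P : Subgroup (GL (Fin r) ℤ_[l])) (n : ℕ) : Set (Subgroup ↥P) :=
  {U | IsOpen (U : Set ↥P) ∧ frattiniOf (levelSubgroup l r P (n - 1)) ≤ U ∧
    ¬ levelSubgroup l r P (n - 1) ≤ U}

/-- If `C ⊆ Π` is a closed subgroup with `Π(n-1) ⊄ C` (`n ≥ 1`), then `C` is contained in
some `U ∈ 𝒞_n(Π)`. -/
theorem exists_mem_Cn_of_not_le (l : ℕ) [Fact (Nat.Prime l)] (r : ℕ)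
    (P : Subgroup (GL (Fin r) ℤ_[l])) (hP : IsClosed (P : Set (GL (Fin r) ℤ_[l])))
    (n : ℕ) (hn : 1 ≤ n) (C : Subgroup ↥P) (hC : IsClosed (C : Set ↥P))
    (hnle : ¬ levelSubgroup l r P (n - 1) ≤ C) :
    ∃ U ∈ Cn l r P n, C ≤ U := by
  classical
  haveI : CompactSpace ↥P := isCompact_iff_compactSpace.mp hP.isCompact
  set K : Subgroup ↥P := levelSubgroup l r P (n - 1) with hK
  haveI hKnormal : K.Normal := by
    rw [hK]; unfold levelSubgroup; infer_instance
  have hKclosed : IsClosed (K : Set ↥P) := by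
    have : (K : Set ↥P) = (P.subtype) ⁻¹'
        (((glRed l r (n - 1)).ker : Subgroup (GL (Fin r) ℤ_[l])) : Set (GL (Fin r) ℤ_[l])) := rfl
    rw [this]
    exact (isClosed_ker_glRed l r (n - 1)).preimage continuous_subtype_val
  haveI : CompactSpace ↥K := isCompact_iff_compactSpace.mp hKclosed.isCompact
  have hΦ'closed : IsClosed ((frattiniOpen ↥K : Subgroup ↥K) : Set ↥K) := by
    rw [frattiniOpen, Subgroup.coe_sInf]
    exact isClosed_biInter fun M hM => M.isClosed_of_isOpen hM.1
  set Φ : Subgroup ↥P := frattiniOf K with hdefΦ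
  have hΦK : Φ ≤ K := Subgroup.map_subtype_le _
  haveI hΦnormal : Φ.Normal := by
    constructor
    intro p hp g
    obtain ⟨q, hq, rfl⟩ := hp
    have hcont : Continuous fun h : ↥K => ((MulAut.conjNormal (G := ↥P) g) h) := by
      apply continuous_induced_rng.mpr
      have : (fun h : ↥K => (((MulAut.conjNormal g) h : ↥K) : ↥P))
          = fun h : ↥K => g * (h : ↥P) * g⁻¹ := by
        funext h; exact MulAut.conjNormal_apply g h
      simp only [Function.comp_def]
      rw [this]
      exact (continuous_const.mul continuous_subtype_val).mul continuous_const
    have hcont' : Continuous fun h : ↥K => ((MulAut.conjNormal (G := ↥P) g).symm h) := by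
      apply continuous_induced_rng.mpr
      have : (fun h : ↥K => ((((MulAut.conjNormal g).symm) h : ↥K) : ↥P))
          = fun h : ↥K => g⁻¹ * (h : ↥P) * g := by
        funext h; exact MulAut.conjNormal_symm_apply g h
      simp only [Function.comp_def]
      rw [this]
      exact (continuous_const.mul continuous_subtype_val).mul continuous_const
    refine ⟨(MulAut.conjNormal g) q, mem_frattiniOpen_of_aut _ hcont hcont' hq, ?_⟩
    simp [MulAut.conjNormal_apply]
  have hKD : ¬ K ≤ C ⊔ Φ := by
    intro hsub
    have hsup : (C.subgroupOf K) ⊔ (frattiniOpen ↥K) = ⊤ := by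
      rw [eq_top_iff]
      intro k _
      have hk : (k : ↥P) ∈ (C : Set ↥P) * (Φ : Set ↥P) := by
        rw [← Subgroup.mul_normal C Φ]
        exact hsub k.2
      obtain ⟨c, hc, p, hp, hcp⟩ := hk
      have hpK : p ∈ K := hΦK hp
      have hcK : c ∈ K := by
        have hceq : c = (k : ↥P) * p⁻¹ := by rw [← hcp]; group
        rw [hceq]; exact K.mul_mem k.2 (K.inv_mem hpK)
      have hkprod : k = (⟨c, hcK⟩ : ↥K) * ⟨p, hpK⟩ := by
        apply Subtype.ext; exact hcp.symm
      rw [hkprod]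
      refine Subgroup.mul_mem _ ?_ ?_
      · exact le_sup_left (α := Subgroup ↥K) (Subgroup.mem_subgroupOf.mpr hc)
      · refine le_sup_right (α := Subgroup ↥K) ?_
        obtain ⟨q, hq, hqp⟩ := hp
        have : (⟨p, hpK⟩ : ↥K) = q := Subtype.ext hqp.symm
        rw [this]; exact hq
    have hCclosed' : IsClosed ((C.subgroupOf K : Subgroup ↥K) : Set ↥K) := by
      have : ((C.subgroupOf K : Subgroup ↥K) : Set ↥K)
          = (fun k : ↥K => (k : ↥P)) ⁻¹' (C : Set ↥P) := rfl
      rw [this]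
      exact hC.preimage continuous_subtype_val
    have htop := eq_top_of_sup_frattiniOpen (C.subgroupOf K) hCclosed' hsup
    exact hnle (Subgroup.subgroupOf_eq_top.mp htop)
  have hDclosed : IsClosed ((C ⊔ Φ : Subgroup ↥P) : Set ↥P) := by
    rw [Subgroup.mul_normal C Φ]
    have hCc : IsCompact (C : Set ↥P) := hC.isCompact
    have hΦc : IsCompact (Φ : Set ↥P) := by
      have : (Φ : Set ↥P) = (K.subtype) '' ((frattiniOpen ↥K : Subgroup ↥K) : Set ↥K) :=
        Subgroup.coe_map _ _
      rw [this]
      exact (hΦ'closed.isCompact).image continuous_subtype_val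
    exact (hCc.mul hΦc).isClosed
  obtain ⟨x, hxK, hxD⟩ : ∃ x ∈ K, x ∉ C ⊔ Φ := by
    by_contra h
    push_neg at h
    exact hKD h
  obtain ⟨U, hUopen, hDU, hxU⟩ := exists_isOpen_subgroup_separating (C ⊔ Φ) hDclosed hxD
  refine ⟨U, ⟨hUopen, le_trans le_sup_right hDU, fun hKU => hxU (hKU hxK)⟩,
    le_trans le_sup_left hDU⟩
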